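/- In the representation ring of SL₂ over a field of characteristic zero, the m-th tensor power of the standard 2-dimensional representation ρ decomposes as ρ^{⊗m} ≅ ⊕_{r ≤ m, r ≡ m mod 2} n_m(r) · Sym^r ρ, where n_m(r) = binom(m, (m+r)/2) · 2(r+1)/(m+r+2). -/
import Mathlib


open Finset

/-- The `n`-th Chebyshev polynomial of the second kind (over `ℂ`), via its explicit formula.
For `g ∈ SL₂` with trace `t`, the character of the irreducible representation `Sym^r ρ`
(`ρ` the standard 2-dimensional representation) is `U_r(t/2)`. -/
noncomputable def chebyshevU (n : ℕ) (x : ℂ) : ℂ :=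
  ∑ k ∈ Finset.range (n / 2 + 1), (-1 : ℂ) ^ k * ((n - k).choose k : ℂ) * (2 * x) ^ (n - 2 * k)

/-- The multiplicity `n_m(r) = binom(m, (m+r)/2) · 2(r+1)/(m+r+2)`. -/
noncomputable def multSL2 (m r : ℕ) : ℂ :=
  (m.choose ((m + r) / 2) : ℂ) * (2 * (r + 1)) / ((m : ℂ) + r + 2)

noncomputable def cf (m r : ℕ) : ℂ :=
  if r % 2 = m % 2 then
    ((m.choose ((m + r) / 2) : ℂ) - (m.choose ((m + r) / 2 + 1) : ℂ))
  else 0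

lemma key_nat (m r j : ℕ) (hj : m + r = 2 * j) :
    m.choose j * (2 * (r + 1)) + m.choose (j + 1) * (m + r + 2)
      = m.choose j * (m + r + 2) := by
  rcases le_or_gt j m with h1 | h1
  · have h2 : m.choose (j+1) * (j+1) = m.choose j * (m - j) := Nat.choose_succ_right_eq m j
    have h3 : m + r + 2 = 2 * (j + 1) := by omega
    rw [h3]
    have h4 : m - j + (r + 1) = j + 1 := by omega
    nlinarith [h2, h4]
  · rw [Nat.choose_eq_zero_of_lt h1, Nat.choose_eq_zero_of_lt (by omega)]
    ring

lemma multSL2_eq_cf (m r : ℕ) (h : r % 2 = m % 2) : multSL2 m r = cf m r := by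
  have hj : m + r = 2 * ((m + r) / 2) := by omega
  have hd : ((m : ℂ) + r + 2) ≠ 0 := by
    have : ((m : ℂ) + r + 2) = ((m + r + 2 : ℕ) : ℂ) := by push_cast; ring
    rw [this]
    exact Nat.cast_ne_zero.mpr (by omega)
  rw [multSL2, cf, if_pos h, div_eq_iff hd]
  have key := key_nat m r ((m + r) / 2) hj
  have keyC := congrArg (Nat.cast : ℕ → ℂ) key
  push_cast at keyC
  linear_combination keyC

lemma cf_zero_of_lt (m r : ℕ) (h : m < r) : cf m r = 0 := by
  rw [cf]
  split_ifs with hp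
  · have h2 : m < (m + r) / 2 := by omega
    rw [Nat.choose_eq_zero_of_lt h2, Nat.choose_eq_zero_of_lt (by omega)]
    ring
  · rfl

lemma cf_rec (m r : ℕ) :
    cf (m + 1) r = cf m (r + 1) + (if r = 0 then 0 else cf m (r - 1)) := by
  rcases eq_or_ne (r % 2) ((m + 1) % 2) with hp | hp
  · rcases Nat.eq_zero_or_pos r with hr | hr
    · subst hr
      -- m+1 even, J = (m+1)/2 ≥ 1, m+1 = 2J
      rw [cf, if_pos hp, cf, if_pos (by omega), if_pos rfl, add_zero]
      have hJ : m + 1 = 2 * ((m + 1) / 2) := by omega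
      set J := (m + 1) / 2 with hJdef
      have hJ1 : 1 ≤ J := by omega
      -- C(m+1,J) - C(m+1,J+1) = C(m,J) - C(m,J+1), with m = 2J-1
      have p1 : (m + 1).choose J = m.choose (J - 1) + m.choose J := by
        obtain ⟨c, hc⟩ : ∃ c, J = c + 1 := ⟨J - 1, by omega⟩
        rw [hc]
        simp [Nat.choose_succ_succ]
      have p2 : (m + 1).choose (J + 1) = m.choose J + m.choose (J + 1) :=
        Nat.choose_succ_succ m J
      have p3 : m.choose (J - 1) = m.choose J := by
        have hm : m - (J - 1) = J := by omega
        have h := Nat.choose_symm (show J - 1 ≤ m by omega)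
        rw [hm] at h
        exact h.symm
      rw [p1, p2, p3]
      push_cast
      ring
    · have hr0 : r ≠ 0 := by omega
      rw [cf, if_pos hp, cf, if_pos (by omega), if_neg hr0, cf, if_pos (by omega)]
      have hJ : m + 1 + r = 2 * ((m + 1 + r) / 2) := by omega
      set J := (m + 1 + r) / 2 with hJdef
      have hJ1 : 1 ≤ J := by omega
      have e1 : (m + (r + 1)) / 2 = J := by omega
      have e2 : (m + (r - 1)) / 2 = J - 1 := by omega
      rw [e1, e2]
      have p1 : (m + 1).choose J = m.choose (J - 1) + m.choose J := by
        obtain ⟨c, hc⟩ : ∃ c, J = c + 1 := ⟨J - 1, by omega⟩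
        rw [hc]
        simp [Nat.choose_succ_succ]
      have p2 : (m + 1).choose (J + 1) = m.choose J + m.choose (J + 1) :=
        Nat.choose_succ_succ m J
      have p3 : J - 1 + 1 = J := by omega
      rw [p1, p2, p3]
      push_cast
      ring
  · have h1 : ¬ ((r + 1) % 2 = m % 2) := by omega
    rw [cf, if_neg hp, cf, if_neg h1]
    rcases Nat.eq_zero_or_pos r with hr | hr
    · subst hr; simp
    · have hr0 : r ≠ 0 := by omega
      rw [if_neg hr0, cf, if_neg (by omega)]
      ring

lemma chebU_zero (x : ℂ) : chebyshevU 0 x = 1 := by simp [chebyshevU]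

lemma chebU_one (x : ℂ) : chebyshevU 1 x = 2 * x := by simp [chebyshevU]

lemma cheb_rec (n : ℕ) (x : ℂ) :
    2 * x * chebyshevU (n + 1) x = chebyshevU (n + 2) x + chebyshevU n x := by
  unfold chebyshevU
  rw [Finset.mul_sum]
  have lhs_eq : ∀ k ∈ Finset.range ((n + 1) / 2 + 1),
      2 * x * ((-1 : ℂ) ^ k * ((n + 1 - k).choose k : ℂ) * (2 * x) ^ (n + 1 - 2 * k))
        = (-1 : ℂ) ^ k * ((n + 1 - k).choose k : ℂ) * (2 * x) ^ (n + 2 - 2 * k) := by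
    intro k hk
    rw [Finset.mem_range] at hk
    have h : n + 2 - 2 * k = (n + 1 - 2 * k) + 1 := by omega
    rw [h, pow_succ]
    ring
  rw [Finset.sum_congr rfl lhs_eq]
  rw [show (n + 1) / 2 + 1 = ((n + 1) / 2) + 1 from rfl, Finset.sum_range_succ']
  rw [show (n + 2) / 2 + 1 = (n / 2 + 1) + 1 from by omega, Finset.sum_range_succ']
  -- simplify the k = 0 terms
  simp only [pow_zero, one_mul, Nat.sub_zero, Nat.mul_zero, Nat.choose_zero_right, Nat.cast_one]
  have hP : ∀ k ∈ Finset.range (n / 2 + 1),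
      (-1 : ℂ) ^ (k + 1) * ((n + 2 - (k + 1)).choose (k + 1) : ℂ) * (2 * x) ^ (n + 2 - 2 * (k + 1))
        = (-1 : ℂ) ^ (k + 1) * ((n - k).choose (k + 1) : ℂ) * (2 * x) ^ (n - 2 * k)
          - (-1 : ℂ) ^ k * ((n - k).choose k : ℂ) * (2 * x) ^ (n - 2 * k) := by
    intro k hk
    rw [Finset.mem_range] at hk
    have e1 : n + 2 - (k + 1) = (n - k) + 1 := by omega
    have e2 : n + 2 - 2 * (k + 1) = n - 2 * k := by omega
    rw [e1, e2, Nat.choose_succ_succ]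
    push_cast
    ring
  have hL : ∀ k ∈ Finset.range ((n + 1) / 2),
      (-1 : ℂ) ^ (k + 1) * ((n + 1 - (k + 1)).choose (k + 1) : ℂ) * (2 * x) ^ (n + 2 - 2 * (k + 1))
        = (-1 : ℂ) ^ (k + 1) * ((n - k).choose (k + 1) : ℂ) * (2 * x) ^ (n - 2 * k) := by
    intro k hk
    rw [Finset.mem_range] at hk
    have e1 : n + 1 - (k + 1) = n - k := by omega
    have e2 : n + 2 - 2 * (k + 1) = n - 2 * k := by omega
    rw [e1, e2]
  have hrange : Finset.range ((n + 1) / 2) ⊆ Finset.range (n / 2 + 1) :=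
    Finset.range_subset_range.mpr (by omega)
  have hsub : ∑ k ∈ Finset.range (n / 2 + 1),
        (-1 : ℂ) ^ (k + 1) * ((n - k).choose (k + 1) : ℂ) * (2 * x) ^ (n - 2 * k)
      = ∑ k ∈ Finset.range ((n + 1) / 2),
        (-1 : ℂ) ^ (k + 1) * ((n - k).choose (k + 1) : ℂ) * (2 * x) ^ (n - 2 * k) := by
    symm
    apply Finset.sum_subset hrange
    intro k hk hk2
    rw [Finset.mem_range] at hk
    simp only [Finset.mem_range, not_lt] at hk2
    rw [Nat.choose_eq_zero_of_lt (by omega)]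
    simp
  rw [Finset.sum_congr rfl hP, Finset.sum_sub_distrib, hsub, Finset.sum_congr rfl hL]
  ring

lemma cheb_mul (r : ℕ) (t : ℂ) :
    t * chebyshevU r (t / 2)
      = chebyshevU (r + 1) (t / 2) + (if r = 0 then 0 else chebyshevU (r - 1) (t / 2)) := by
  rcases r with _ | n
  · rw [if_pos rfl, chebU_zero, chebU_one]
    ring
  · rw [if_neg (Nat.succ_ne_zero n)]
    have h := cheb_rec n (t / 2)
    have ht : 2 * (t / 2) = t := by ring
    rw [ht] at h
    simpa using h

lemma main_id (m : ℕ) (t : ℂ) :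
    t ^ m = ∑ r ∈ Finset.range (m + 1), cf m r * chebyshevU r (t / 2) := by
  induction m with
  | zero => simp [cf, chebU_zero]
  | succ m ih =>
    have hext : ∑ r ∈ Finset.range (m + 1), cf m r * chebyshevU r (t / 2)
        = ∑ r ∈ Finset.range (m + 2), cf m r * chebyshevU r (t / 2) := by
      conv_rhs => rw [Finset.sum_range_succ]
      rw [cf_zero_of_lt m (m + 1) (by omega), zero_mul, add_zero]
    rw [pow_succ, ih, hext, Finset.sum_mul]
    have step : ∀ r ∈ Finset.range (m + 2), cf m r * chebyshevU r (t / 2) * t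
        = cf m r * chebyshevU (r + 1) (t / 2)
          + cf m r * (if r = 0 then 0 else chebyshevU (r - 1) (t / 2)) := by
      intro r _
      rw [mul_comm _ t, ← mul_assoc, mul_comm t (cf m r), mul_assoc, cheb_mul]
      ring
    rw [Finset.sum_congr rfl step, Finset.sum_add_distrib]
    -- A + B
    have hA : ∑ r ∈ Finset.range (m + 2), cf m r * chebyshevU (r + 1) (t / 2)
        = ∑ s ∈ Finset.range (m + 2), (if s = 0 then 0 else cf m (s - 1)) * chebyshevU s (t / 2) := by
      rw [Finset.sum_range_succ (n := m + 1), cf_zero_of_lt m (m + 1) (by omega), zero_mul, add_zero]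
      rw [Finset.sum_range_succ' (n := m + 1)]
      simp
    have hB : ∑ r ∈ Finset.range (m + 2), cf m r * (if r = 0 then 0 else chebyshevU (r - 1) (t / 2))
        = ∑ s ∈ Finset.range (m + 2), cf m (s + 1) * chebyshevU s (t / 2) := by
      rw [Finset.sum_range_succ' (n := m + 1)]
      rw [Finset.sum_range_succ (n := m + 1), cf_zero_of_lt m (m + 2) (by omega), zero_mul, add_zero]
      simp
    rw [hA, hB, ← Finset.sum_add_distrib]
    apply Finset.sum_congr rfl
    intro s _
    rw [cf_rec]
    ring

/-- The decomposition `ρ^{⊗m} ≅ ⊕_{r ≤ m, r ≡ m (2)} n_m(r) · Sym^r ρ` in the representation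
ring of `SL₂` over a field of characteristic zero, expressed as the corresponding identity of
characters: since representations of `SL₂` in characteristic zero are determined by their
characters, for every `g ∈ SL₂(ℂ)` with trace `t` one has
`t^m = Σ_{r ≤ m, r ≡ m (2)} n_m(r) · U_r(t/2)`, where `U_r(t/2)` is the character of
`Sym^r ρ` at `g`. -/
theorem stmt_8 (m : ℕ) (g : Matrix.SpecialLinearGroup (Fin 2) ℂ) :
    (Matrix.trace (g : Matrix (Fin 2) (Fin 2) ℂ)) ^ m =
      ∑ r ∈ Finset.range (m + 1),
        if r % 2 = m % 2 then
          multSL2 m r * chebyshevU r (Matrix.trace (g : Matrix (Fin 2) (Fin 2) ℂ) / 2)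
        else 0 := by
  rw [main_id m (Matrix.trace (g : Matrix (Fin 2) (Fin 2) ℂ))]
  apply Finset.sum_congr rfl
  intro r _
  rw [cf]
  split_ifs with h
  · rw [multSL2_eq_cf m r h, cf, if_pos h]
  · exact zero_mul _
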